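/- Let k be a field, n ≥ 1, f a permutation of {1,…,n}, and A = A(k,X,r_f) the Yang–Baxter algebra of the permutation idempotent solution r_f. The images under the quotient map of the monomials {1} ∪ {x₁^α x_m : α ∈ ℕ, 1 ≤ m ≤ n} (where x₁^α x_m denotes the word consisting of α copies of x₁ followed by x_m) form a k-vector-space basis of A. In particular, for each d ≥ 1 the n elements x₁^{d−1} x₁, x₁^{d−1} x₂, …, x₁^{d−1} x_n are linearly independent in A and their span is the image in A of the span of all words of length d. -/

import Mathlib

noncomputable section

open FreeAlgebra Pointwise

/-- The defining relations of the Yang–Baxter algebra of the permutation idempotent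
solution `r_f(x,y) = (f(y), y)`. -/
def ybRel (k : Type*) [Field k] (n : ℕ) (f : Equiv.Perm (Fin n)) :
    FreeAlgebra k (Fin n) → FreeAlgebra k (Fin n) → Prop :=
  fun a b => ∃ j p : Fin n, a = ι k j * ι k p ∧ b = ι k (f p) * ι k p

/-- The Yang–Baxter algebra `A(k, X, r_f)`. -/
abbrev YBA (k : Type*) [Field k] (n : ℕ) (f : Equiv.Perm (Fin n)) :=
  RingQuot (ybRel k n f)

/-- The image of the generator `x_i` in `A(k, X, r_f)`. -/
def xgen (k : Type*) [Field k] (n : ℕ) (f : Equiv.Perm (Fin n)) (i : Fin n) :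
    YBA k n f :=
  RingQuot.mkAlgHom k (ybRel k n f) (ι k i)

/-- The image in `A(k, X, r_f)` of the word (monomial) indexed by the list `w`. -/
def ybWord (k : Type*) [Field k] (n : ℕ) (f : Equiv.Perm (Fin n)) (w : List (Fin n)) :
    YBA k n f :=
  RingQuot.mkAlgHom k (ybRel k n f) ((w.map (ι k)).prod)

/-! ### Auxiliary material -/

/-- Type synonym for `ℕ × Fin n`, carrying the semigroup structure
`(α, m) * (β, p) = (α + β + 1, p)`. -/
structure YBS (n : ℕ) where
  a : ℕ
  m : Fin n

instance YBS.instSemigroup (n : ℕ) : Semigroup (YBS n) where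
  mul x y := ⟨x.a + y.a + 1, y.m⟩
  mul_assoc x y z := by
    show (⟨(x.a + y.a + 1) + z.a + 1, z.m⟩ : YBS n) = ⟨x.a + (y.a + z.a + 1) + 1, z.m⟩
    congr 1
    omega

theorem YBS.mul_def {n : ℕ} (x y : YBS n) : x * y = ⟨x.a + y.a + 1, y.m⟩ := rfl

/-- The monoid obtained by adjoining a unit to `YBS n`. -/
abbrev YBM (n : ℕ) := WithOne (YBS n)

section aux

variable (k : Type*) [Field k] (n : ℕ) [NeZero n] (f : Equiv.Perm (Fin n))

theorem xgen_mul_eq (a c b : Fin n) :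
    xgen k n f a * xgen k n f b = xgen k n f c * xgen k n f b := by
  have h1 : xgen k n f a * xgen k n f b = xgen k n f (f b) * xgen k n f b := by
    simp only [xgen, ← map_mul]
    exact RingQuot.mkAlgHom_rel k ⟨a, b, rfl, rfl⟩
  have h2 : xgen k n f c * xgen k n f b = xgen k n f (f b) * xgen k n f b := by
    simp only [xgen, ← map_mul]
    exact RingQuot.mkAlgHom_rel k ⟨c, b, rfl, rfl⟩
  rw [h1, h2]

theorem xgen_mul_pow (a : Fin n) (e : ℕ) (m : Fin n) :
    xgen k n f a * (xgen k n f 0 ^ e * xgen k n f m) =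
      xgen k n f 0 ^ (e + 1) * xgen k n f m := by
  induction e generalizing a with
  | zero =>
    rw [pow_zero, one_mul, pow_one]
    exact xgen_mul_eq k n f a 0 m
  | succ e ih =>
    rw [pow_succ' (xgen k n f 0) e, mul_assoc, ← mul_assoc (xgen k n f a),
      xgen_mul_eq k n f a 0 0, mul_assoc, ih 0, ← mul_assoc, ← pow_succ']

theorem prod_form (α : ℕ) (m : Fin n) (β : ℕ) (p : Fin n) :
    (xgen k n f 0 ^ α * xgen k n f m) * (xgen k n f 0 ^ β * xgen k n f p) =
      xgen k n f 0 ^ (α + β + 1) * xgen k n f p := by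
  rw [mul_assoc, xgen_mul_pow, ← mul_assoc, ← pow_add]
  ring_nf

theorem ybWord_cons (a : Fin n) (w : List (Fin n)) :
    ybWord k n f (a :: w) = xgen k n f a * ybWord k n f w := by
  simp [ybWord, xgen, List.map_cons, List.prod_cons, map_mul]

theorem ybWord_canonical : ∀ (w : List (Fin n)) (h : w ≠ []),
    ybWord k n f w = xgen k n f 0 ^ (w.length - 1) * xgen k n f (w.getLast h)
  | [], h => absurd rfl h
  | [a], _ => by
    simp [ybWord, xgen, List.getLast]
  | a :: b :: t, h => by
    rw [ybWord_cons, ybWord_canonical (b :: t) (by simp), xgen_mul_pow,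
      show (a :: b :: t).getLast h = (b :: t).getLast (by simp) from List.getLast_cons _]
    congr 2

/-- The comparison algebra homomorphism into a monoid algebra. -/
def ybCompare : YBA k n f →ₐ[k] MonoidAlgebra k (YBM n) :=
  RingQuot.liftAlgHom k
    ⟨FreeAlgebra.lift k fun i => MonoidAlgebra.single (↑(⟨0, i⟩ : YBS n) : YBM n) 1, by
      rintro a b ⟨j, p, rfl, rfl⟩
      simp only [map_mul, FreeAlgebra.lift_ι_apply, MonoidAlgebra.single_mul_single,
        ← WithOne.coe_mul, YBS.mul_def]⟩

theorem ybCompare_xgen (i : Fin n) :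
    ybCompare k n f (xgen k n f i) = MonoidAlgebra.single (↑(⟨0, i⟩ : YBS n) : YBM n) 1 := by
  simp [ybCompare, xgen, RingQuot.liftAlgHom_mkAlgHom_apply, FreeAlgebra.lift_ι_apply]

theorem YBM_pow_mul (α β : ℕ) (m : Fin n) :
    (↑(⟨0, 0⟩ : YBS n) : YBM n) ^ α * ↑(⟨β, m⟩ : YBS n) = ↑(⟨α + β, m⟩ : YBS n) := by
  induction α generalizing β with
  | zero =>
    rw [pow_zero, one_mul, Nat.zero_add]
  | succ α ih =>
    rw [pow_succ, mul_assoc, ← WithOne.coe_mul, YBS.mul_def, ih]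
    simp only [WithOne.coe_inj, YBS.mk.injEq, and_true]
    omega

/-- Embedding of the index type into the monoid `YBM n`. -/
def ybEmb : Option (ℕ × Fin n) → YBM n :=
  fun o => o.elim 1 fun am => (↑(⟨am.1, am.2⟩ : YBS n) : YBM n)

theorem ybEmb_injective : Function.Injective (ybEmb n) := by
  rintro (_ | ⟨α, m⟩) (_ | ⟨β, p⟩) h
  · rfl
  · exact absurd h.symm (by simp [ybEmb, WithOne.coe_ne_one])
  · exact absurd h (by simp [ybEmb, WithOne.coe_ne_one])
  · simp only [ybEmb, Option.elim, WithOne.coe_inj, YBS.mk.injEq] at h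
    simp [h.1, h.2]

theorem ybCompare_family (o : Option (ℕ × Fin n)) :
    ybCompare k n f
        (o.elim (1 : YBA k n f) fun am => (xgen k n f 0) ^ am.1 * xgen k n f am.2) =
      MonoidAlgebra.single (ybEmb n o) 1 := by
  cases o with
  | none =>
    simp [ybEmb, MonoidAlgebra.one_def]
  | some am =>
    obtain ⟨α, m⟩ := am
    simp only [Option.elim, map_mul, map_pow, ybCompare_xgen,
      MonoidAlgebra.single_pow, one_pow, MonoidAlgebra.single_mul_single, mul_one,
      YBM_pow_mul, Nat.add_zero, ybEmb]

end aux

/-- the images of the monomials `{1} ∪ {x₁^α x_m}` form a `k`-basis of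
`A(k,X,r_f)`; in particular, for each `d ≥ 1` the `n` elements `x₁^{d-1} x_m` are
linearly independent and span the image of the span of all words of length `d`. -/
theorem stmt_2 (k : Type*) [Field k] (n : ℕ) [NeZero n] (f : Equiv.Perm (Fin n)) :
    LinearIndependent k
      (fun o : Option (ℕ × Fin n) =>
        o.elim (1 : YBA k n f) fun am => (xgen k n f 0) ^ am.1 * xgen k n f am.2) ∧
    Submodule.span k
      (Set.range fun o : Option (ℕ × Fin n) =>
        o.elim (1 : YBA k n f) fun am => (xgen k n f 0) ^ am.1 * xgen k n f am.2) = ⊤ ∧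
    ∀ d : ℕ, 1 ≤ d →
      LinearIndependent k
        (fun m : Fin n => (xgen k n f 0) ^ (d - 1) * xgen k n f m) ∧
      Submodule.span k
        (Set.range fun m : Fin n => (xgen k n f 0) ^ (d - 1) * xgen k n f m) =
      Submodule.span k
        {a : YBA k n f | ∃ w : List (Fin n), w.length = d ∧ a = ybWord k n f w} := by
  set F : Option (ℕ × Fin n) → YBA k n f :=
    fun o => o.elim (1 : YBA k n f) fun am => (xgen k n f 0) ^ am.1 * xgen k n f am.2 with hF
  -- linear independence of the full family
  have hLI : LinearIndependent k F := by
    have h1 : LinearIndependent k (fun a : YBM n => MonoidAlgebra.single a (1 : k)) := by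
      have := (MonoidAlgebra.basis (YBM n) k).linearIndependent
      rwa [show ⇑(MonoidAlgebra.basis (YBM n) k) = fun a => MonoidAlgebra.single a (1 : k) from
        funext (MonoidAlgebra.basis_apply k)] at this
    have h2 : LinearIndependent k
        (fun o : Option (ℕ × Fin n) => MonoidAlgebra.single (ybEmb n o) (1 : k)) :=
      h1.comp (ybEmb n) (ybEmb_injective n)
    have h3 : (ybCompare k n f).toLinearMap ∘ F =
        fun o : Option (ℕ × Fin n) => MonoidAlgebra.single (ybEmb n o) (1 : k) := by
      funext o
      exact ybCompare_family k n f o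
    exact LinearIndependent.of_comp (ybCompare k n f).toLinearMap (h3 ▸ h2)
  refine ⟨hLI, ?_, ?_⟩
  · -- spanning
    set T : Submodule k (YBA k n f) := Submodule.span k (Set.range F) with hT
    have hone : (1 : YBA k n f) ∈ T :=
      Submodule.subset_span ⟨none, rfl⟩
    have hmulset : Set.range F * Set.range F ⊆ (T : Set (YBA k n f)) := by
      rintro _ ⟨_, ⟨o₁, rfl⟩, _, ⟨o₂, rfl⟩, rfl⟩
      cases o₁ with
      | none =>
        simpa [hF] using Submodule.subset_span (Set.mem_range_self o₂)
      | some am₁ =>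
        cases o₂ with
        | none =>
          show F (some am₁) * F none ∈ T
          rw [show F none = 1 from rfl, mul_one]
          exact Submodule.subset_span (Set.mem_range_self (some am₁))
        | some am₂ =>
          obtain ⟨α, m⟩ := am₁
          obtain ⟨β, p⟩ := am₂
          have := prod_form k n f α m β p
          simp only [hF, Option.elim, this]
          exact Submodule.subset_span ⟨some (α + β + 1, p), rfl⟩
    have hmul : ∀ x y : YBA k n f, x ∈ T → y ∈ T → x * y ∈ T := by
      have : T * T ≤ T := by
        rw [hT, Submodule.span_mul_span]
        exact Submodule.span_le.mpr hmulset
      exact fun x y hx hy => this (Submodule.mul_mem_mul hx hy)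
    set T' : Subalgebra k (YBA k n f) := T.toSubalgebra hone hmul with hT'
    have hgen : ∀ i : Fin n, xgen k n f i ∈ T' := by
      intro i
      show xgen k n f i ∈ T
      have : F (some (0, i)) = xgen k n f i := by simp [hF]
      exact this ▸ Submodule.subset_span (Set.mem_range_self _)
    have hadj : Algebra.adjoin k (Set.range (xgen k n f)) = ⊤ := by
      have hs := RingQuot.mkAlgHom_surjective k (ybRel k n f)
      have : Set.range (xgen k n f) =
          (RingQuot.mkAlgHom k (ybRel k n f)) '' Set.range (ι k) := by
        rw [← Set.range_comp]; rfl
      rw [this, ← AlgHom.map_adjoin, FreeAlgebra.adjoin_range_ι, Algebra.map_top,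
        (AlgHom.range_eq_top _).mpr hs]
    have htop : T' = ⊤ := by
      rw [← top_le_iff, ← hadj]
      exact Algebra.adjoin_le (by rintro _ ⟨i, rfl⟩; exact hgen i)
    rw [← top_le_iff]
    intro a _
    have : a ∈ T' := htop ▸ trivial
    exact this
  · -- words of length d
    intro d hd
    constructor
    · have : (fun m : Fin n => (xgen k n f 0) ^ (d - 1) * xgen k n f m) =
          F ∘ (fun m : Fin n => some (d - 1, m)) := by
        funext m; rfl
      rw [this]
      exact hLI.comp _ (fun a b h =>
        congrArg Prod.snd (Option.some_injective _ h))
    · congr 1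
      ext a
      constructor
      · rintro ⟨m, rfl⟩
        have hlen : (List.replicate (d - 1) (0 : Fin n) ++ [m]).length = d := by
          simp only [List.length_append, List.length_replicate, List.length_cons,
            List.length_nil]
          omega
        refine ⟨List.replicate (d - 1) (0 : Fin n) ++ [m], hlen, ?_⟩
        rw [ybWord_canonical k n f _ (by simp), hlen,
          show (List.replicate (d - 1) (0 : Fin n) ++ [m]).getLast (by simp) = m from
            List.getLast_concat]
      · rintro ⟨w, hw, rfl⟩
        have hne : w ≠ [] := by
          intro h; rw [h] at hw; simp at hw; omega
        refine ⟨w.getLast hne, ?_⟩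
        rw [ybWord_canonical k n f w hne, hw]

end
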